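/- The function λ₀ of Theorem 1.2 is identically zero on (-π/2, π/2) if and only if Λ = ulΛ = c = 0. -/

import Mathlib

open Real

/-- The sequence `a₀ = 1`, `a_j = ((2m - 2j + 4)/(2m - 2j + 1)) a_{j-1}`. -/
noncomputable def aSeq (m : ℕ) : ℕ → ℝ
  | 0 => 1
  | j + 1 => ((2 * (m : ℝ) - 2 * ((j : ℝ) + 1) + 4) / (2 * (m : ℝ) - 2 * ((j : ℝ) + 1) + 1))
      * aSeq m j

/-- `λ₀(φ) = ulΛ/(2m+2) + (Λ/(2m+1) − ulΛ/(2m+2))(Σ_{j=0}^m a_j cos^{2j}φ − 2 a_m cos^{2m+2}φ)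
  + c cos^{2m+1}φ sin φ`. -/
noncomputable def lam0 (m : ℕ) (Λ ulΛ c : ℝ) (φ : ℝ) : ℝ :=
  ulΛ / (2 * (m : ℝ) + 2)
    + (Λ / (2 * (m : ℝ) + 1) - ulΛ / (2 * (m : ℝ) + 2)) *
        ((∑ j ∈ Finset.range (m + 1), aSeq m j * Real.cos φ ^ (2 * j))
          - 2 * aSeq m m * Real.cos φ ^ (2 * m + 2))
    + c * Real.cos φ ^ (2 * m + 1) * Real.sin φ


/-- `λ₀` vanishes identically on `(-π/2, π/2)` iff `Λ = ulΛ = c = 0`. -/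
theorem stmt12 (m : ℕ) (hm : 2 ≤ m) (Λ ulΛ c : ℝ) :
    (∀ φ ∈ Set.Ioo (-(π / 2)) (π / 2), lam0 m Λ ulΛ c φ = 0)
      ↔ (Λ = 0 ∧ ulΛ = 0 ∧ c = 0) := by
  constructor
  · intro h
    have hπ : (0:ℝ) < π := Real.pi_pos
    -- Step 1: c = 0, by evaluating at ±π/4.
    have hmem1 : (π/4 : ℝ) ∈ Set.Ioo (-(π / 2)) (π / 2) := by
      constructor <;> nlinarith
    have hmem2 : (-(π/4) : ℝ) ∈ Set.Ioo (-(π / 2)) (π / 2) := by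
      constructor <;> nlinarith
    have h1 := h _ hmem1
    have h2 := h _ hmem2
    rw [lam0] at h1 h2
    rw [Real.cos_neg, Real.sin_neg] at h2
    have hc : c = 0 := by
      have hdiff : 2 * (c * Real.cos (π/4) ^ (2*m+1) * Real.sin (π/4)) = 0 := by
        linarith
      have hcos : Real.cos (π/4) > 0 := Real.cos_pos_of_mem_Ioo ⟨by nlinarith, by nlinarith⟩
      have hsin : Real.sin (π/4) > 0 := Real.sin_pos_of_pos_of_lt_pi (by positivity) (by nlinarith)
      have := pow_pos hcos (2*m+1)
      rcases mul_eq_zero.mp hdiff with h' | h'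
      · norm_num at h'
      rcases mul_eq_zero.mp h' with h' | h'
      · rcases mul_eq_zero.mp h' with h'' | h''
        · exact h''
        · exact absurd h'' (ne_of_gt this)
      · exact absurd h' (ne_of_gt hsin)
    subst hc
    -- Step 2: polynomial in t = cos² φ
    set A := ulΛ / (2 * (m : ℝ) + 2) with hA
    set K := Λ / (2 * (m : ℝ) + 1) - A with hK
    set p : Polynomial ℝ :=
      Polynomial.C A + Polynomial.C K *
        ((∑ j ∈ Finset.range (m + 1), Polynomial.C (aSeq m j) * Polynomial.X ^ j)
          - Polynomial.C (2 * aSeq m m) * Polynomial.X ^ (m + 1)) with hp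
    have hroot : ∀ t ∈ Set.Ioo (0:ℝ) 1, p.IsRoot t := by
      intro t ht
      obtain ⟨ht0, ht1⟩ := ht
      have hst : Real.sqrt t ∈ Set.Ioo (0:ℝ) 1 := by
        constructor
        · exact Real.sqrt_pos.mpr ht0
        · rw [show (1:ℝ) = Real.sqrt 1 by simp]
          exact Real.sqrt_lt_sqrt (le_of_lt ht0) ht1
      set φ := Real.arccos (Real.sqrt t) with hφ
      have hφmem : φ ∈ Set.Ioo (-(π / 2)) (π / 2) := by
        constructor
        · have := Real.arccos_nonneg (Real.sqrt t)
          nlinarith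
        · exact Real.arccos_lt_pi_div_two.mpr hst.1
      have hcosφ : Real.cos φ = Real.sqrt t := by
        rw [hφ, Real.cos_arccos] <;> nlinarith [hst.1, hst.2]
      have hval := h _ hφmem
      rw [lam0] at hval
      have hsq : Real.cos φ ^ 2 = t := by
        rw [hcosφ, Real.sq_sqrt (le_of_lt ht0)]
      have hpowj : ∀ j : ℕ, Real.cos φ ^ (2 * j) = t ^ j := by
        intro j; rw [pow_mul, hsq]
      have hpowm : Real.cos φ ^ (2 * m + 2) = t ^ (m + 1) := by
        rw [show 2 * m + 2 = 2 * (m + 1) by ring, pow_mul, hsq]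
      rw [Polynomial.IsRoot, hp]
      simp only [Polynomial.eval_add, Polynomial.eval_mul, Polynomial.eval_C,
        Polynomial.eval_sub, Polynomial.eval_finset_sum, Polynomial.eval_pow,
        Polynomial.eval_X]
      simp only [hpowj, hpowm] at hval
      rw [← hA, ← hK] at hval
      linarith [hval]
    have hpzero : p = 0 := by
      apply Polynomial.eq_zero_of_infinite_isRoot
      have hsub : Set.Ioo (0:ℝ) 1 ⊆ {x | p.IsRoot x} := fun t ht => hroot t ht
      exact Set.Infinite.mono hsub (Set.Ioo_infinite (by norm_num))
    -- coefficients
    have hc1 : p.coeff 1 = K * aSeq m 1 := by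
      rw [hp]
      simp only [Polynomial.coeff_add, Polynomial.coeff_C_mul, Polynomial.coeff_sub,
        Polynomial.finset_sum_coeff, Polynomial.coeff_C_mul, Polynomial.coeff_X_pow,
        Polynomial.coeff_C]
      rw [Finset.sum_eq_single 1]
      · have h1 : (1:ℕ) ≠ m + 1 := by omega
        simp [h1, show m ≠ 0 by omega]
      · intro b _ hb; simp [Ne.symm hb]
      · intro hb; exfalso; apply hb; simp; omega
    have hc0 : p.coeff 0 = A + K * aSeq m 0 := by
      rw [hp]
      simp only [Polynomial.coeff_add, Polynomial.coeff_C_mul, Polynomial.coeff_sub,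
        Polynomial.finset_sum_coeff, Polynomial.coeff_C_mul, Polynomial.coeff_X_pow,
        Polynomial.coeff_C]
      rw [Finset.sum_eq_single 0]
      · have h1 : (0:ℕ) ≠ m + 1 := by omega
        simp [h1]
      · intro b _ hb; simp [Ne.symm hb]
      · intro hb; exfalso; apply hb; simp
    have ha1pos : 0 < aSeq m 1 := by
      have hm2 : (2:ℝ) ≤ (m:ℝ) := by exact_mod_cast hm
      have heq : aSeq m 1 = ((2 * (m : ℝ) - 2 * (((0:ℕ) : ℝ) + 1) + 4)
          / (2 * (m : ℝ) - 2 * (((0:ℕ):ℝ) + 1) + 1)) * aSeq m 0 := rfl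
      have h0 : aSeq m 0 = 1 := rfl
      rw [heq, h0]
      push_cast
      have h1 : (0:ℝ) < 2 * (m : ℝ) - 2 * ((0:ℝ) + 1) + 4 := by nlinarith
      have h2 : (0:ℝ) < 2 * (m : ℝ) - 2 * ((0:ℝ) + 1) + 1 := by nlinarith
      positivity
    have hKzero : K = 0 := by
      have h' : K * aSeq m 1 = 0 := by rw [← hc1, hpzero]; simp
      rcases mul_eq_zero.mp h' with h'' | h''
      · exact h''
      · exact absurd h'' (ne_of_gt ha1pos)
    have hAzero : A = 0 := by
      have h' : A + K * aSeq m 0 = 0 := by rw [← hc0, hpzero]; simp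
      rw [hKzero] at h'
      linarith
    have hul : ulΛ = 0 := by
      have hm2 : (2:ℝ) ≤ (m:ℝ) := by exact_mod_cast hm
      rw [hA] at hAzero
      field_simp at hAzero
      simpa using hAzero
    have hΛ : Λ = 0 := by
      have hm2 : (2:ℝ) ≤ (m:ℝ) := by exact_mod_cast hm
      rw [hK, hAzero] at hKzero
      field_simp at hKzero
      simpa using hKzero
    exact ⟨hΛ, hul, rfl⟩
  · rintro ⟨rfl, rfl, rfl⟩ φ _
    simp [lam0]
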